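/- Let n ≥ 2. Define polynomials π_1,…,π_n ∈ ℝ[x_1,…,x_n] by π_i = s_{2i} for 1 ≤ i ≤ ⌊n/2⌋, π_{⌊n/2⌋+1} = e_n = x_1⋯x_n, and π_i = s_{2i−2} for ⌊n/2⌋+1 < i ≤ n. Fix 1 ≤ j ≤ n and let f_1,…,f_m ∈ ℝ[x_1,…,x_n] be polynomials each belonging to the ℝ-subalgebra generated by {π_i : 1 ≤ i ≤ n, i ≠ j}. If the real variety X = {x ∈ ℝ^n : f_1(x) = ⋯ = f_m(x) = 0} is nonempty, then there exists x ∈ X with |x_i| = |x_{i'}| for some indices i ≠ i'. -/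

import Mathlib

open MvPolynomial

/-- The basic invariants `π₁, …, πₙ` of the reflection group `Dₙ` (equation (2.2)):
`πᵢ = s_{2i}` for `1 ≤ i ≤ ⌊n/2⌋`, `π_{⌊n/2⌋+1} = eₙ = x₁⋯xₙ`, and
`πᵢ = s_{2i-2}` for `⌊n/2⌋+1 < i ≤ n`. -/
noncomputable def basicInvariantDn (n i : ℕ) : MvPolynomial (Fin n) ℝ :=
  if i ≤ n / 2 then psum (Fin n) ℝ (2 * i)
  else if i = n / 2 + 1 then ∏ j, X j
  else psum (Fin n) ℝ (2 * i - 2)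

lemma eval_basicInvariantDn (n i : ℕ) (x : Fin n → ℝ) :
    eval x (basicInvariantDn n i) =
      if i ≤ n / 2 then ∑ l, x l ^ (2 * i)
      else if i = n / 2 + 1 then ∏ l, x l
      else ∑ l, x l ^ (2 * i - 2) := by
  unfold basicInvariantDn psum
  split_ifs <;> simp

lemma eval_congr_adjoin {σ : Type*} (S : Set (MvPolynomial σ ℝ)) (x y : σ → ℝ)
    (h : ∀ p ∈ S, eval y p = eval x p) :
    ∀ q ∈ Algebra.adjoin ℝ S, eval y q = eval x q := by
  intro q hq
  induction hq using Algebra.adjoin_induction with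
  | mem p hp => exact h p hp
  | algebraMap r => simp
  | add a b _ _ ha hb => simp [ha, hb]
  | mul a b _ _ ha hb => simp [ha, hb]


lemma vandermonde_inj {n : ℕ} (t : Fin n → ℝ) (hinj : Function.Injective t)
    (u : Fin n → ℝ) (h : ∀ k : Fin n, ∑ i, t i ^ (k : ℕ) * u i = 0) : u = 0 := by
  have hdet : ((Matrix.vandermonde t).transpose).det ≠ 0 := by
    rw [Matrix.det_transpose, Matrix.det_vandermonde]
    refine Finset.prod_ne_zero_iff.2 fun i _ => Finset.prod_ne_zero_iff.2 fun l hl => ?_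
    have hil : i < l := Finset.mem_Ioi.mp hl
    exact sub_ne_zero_of_ne fun e => absurd (hinj e.symm) (fun q => absurd (q ▸ hil) (lt_irrefl l))
  apply Matrix.eq_zero_of_mulVec_eq_zero hdet
  funext k
  simpa [Matrix.mulVec, Matrix.transpose, Matrix.vandermonde, dotProduct] using h k

lemma jacobian_inj {n : ℕ} (hn : 2 ≤ n) (y : Fin n → ℝ)
    (hinj : Function.Injective (fun i => (y i) ^ 2)) (v : Fin n → ℝ)
    (hprod : ∑ i, (∏ l ∈ Finset.univ.erase i, y l) * v i = 0)
    (hpow : ∀ m : ℕ, 1 ≤ m → m ≤ n - 1 →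
      ∑ i, ((2 * m : ℕ) : ℝ) * y i ^ (2 * m - 1) * v i = 0) :
    v = 0 := by
  by_cases hz : ∀ i, y i ≠ 0
  · -- all coordinates nonzero
    set u : Fin n → ℝ := fun i => v i / y i with hu
    have hu0 : u = 0 := by
      apply vandermonde_inj _ hinj
      intro k
      rcases Nat.eq_zero_or_pos (k : ℕ) with hk | hk
      · -- from the product row
        have hPne : (∏ l, y l) ≠ 0 := Finset.prod_ne_zero_iff.2 fun l _ => hz l
        have heq : ∑ i, (∏ l, y l) * u i = 0 := by
          rw [← hprod]
          refine Finset.sum_congr rfl fun i _ => ?_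
          rw [hu, ← Finset.prod_erase_mul _ _ (Finset.mem_univ i), mul_assoc]
          congr 1
          rw [mul_comm]
          exact div_mul_cancel₀ _ (hz i)
        rw [← Finset.mul_sum] at heq
        have hsum : ∑ i, u i = 0 := by
          rcases mul_eq_zero.1 heq with h | h
          · exact absurd h hPne
          · exact h
        simpa [hk] using hsum
      · have hk2 : (k : ℕ) ≤ n - 1 := by omega
        have h2 := hpow k hk hk2
        have heq : ∑ i, ((2 * (k : ℕ) : ℕ) : ℝ) * (((y i) ^ 2) ^ (k : ℕ) * u i) = 0 := by
          rw [← h2]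
          refine Finset.sum_congr rfl fun i _ => ?_
          have e1 : (y i ^ 2) ^ (k : ℕ) = y i ^ (2 * (k:ℕ) - 1) * y i := by
            rw [← pow_mul, ← pow_succ]
            congr 1
            try omega
          rw [hu, e1]
          have hyi := hz i
          field_simp
        rw [← Finset.mul_sum] at heq
        rcases mul_eq_zero.1 heq with h | h
        · exfalso
          have h2k : (2 * (k:ℕ) : ℕ) ≠ 0 := by omega
          exact h2k (by exact_mod_cast h)
        · exact h
    funext i
    have hui := congrFun hu0 i
    simp only [hu, Pi.zero_apply] at hui
    rcases div_eq_zero_iff.1 hui with h | h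
    · exact h
    · exact absurd h (hz i)
  · -- some coordinate is zero
    push_neg at hz
    obtain ⟨i0, hi0⟩ := hz
    have hzother : ∀ i, i ≠ i0 → y i ≠ 0 := by
      intro i hii0 h0
      exact hii0 (hinj (by simp [h0, hi0]))
    have hvi0 : v i0 = 0 := by
      have hsingle : ∑ i, (∏ l ∈ Finset.univ.erase i, y l) * v i
          = (∏ l ∈ Finset.univ.erase i0, y l) * v i0 := by
        refine Finset.sum_eq_single i0 (fun i _ hii0 => ?_) (fun h => absurd (Finset.mem_univ i0) h)
        have : (∏ l ∈ Finset.univ.erase i, y l) = 0 :=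
          Finset.prod_eq_zero (Finset.mem_erase.2 ⟨Ne.symm hii0, Finset.mem_univ i0⟩) hi0
        rw [this, zero_mul]
      rw [hsingle] at hprod
      have hPne : (∏ l ∈ Finset.univ.erase i0, y l) ≠ 0 :=
        Finset.prod_ne_zero_iff.2 fun l hl => hzother l (Finset.mem_erase.1 hl).1
      rcases mul_eq_zero.1 hprod with h | h
      · exact absurd h hPne
      · exact h
    obtain ⟨n', rfl⟩ : ∃ n', n = n' + 1 := ⟨n - 1, by omega⟩
    set σ : Fin n' → Fin (n' + 1) := i0.succAbove with hσ
    have hσne : ∀ b, σ b ≠ i0 := fun b => Fin.succAbove_ne i0 b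
    set u : Fin n' → ℝ := fun b => v (σ b) / y (σ b) with hu
    have hu0 : u = 0 := by
      have hdet : (Matrix.of fun (k b : Fin n') =>
          ((y (σ b)) ^ 2) ^ ((k : ℕ) + 1)).det ≠ 0 := by
        have hfac : (Matrix.of fun (k b : Fin n') => ((y (σ b)) ^ 2) ^ ((k : ℕ) + 1))
            = Matrix.of fun (k b : Fin n') =>
              ((y (σ b)) ^ 2) * ((Matrix.vandermonde fun b => (y (σ b))^2).transpose k b) := by
          ext k b
          simp [Matrix.vandermonde, pow_succ, mul_comm]
        rw [hfac, Matrix.det_mul_row, Matrix.det_transpose, Matrix.det_vandermonde]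
        apply mul_ne_zero
        · exact Finset.prod_ne_zero_iff.2 fun b _ => pow_ne_zero 2 (hzother _ (hσne b))
        · refine Finset.prod_ne_zero_iff.2 fun i _ => Finset.prod_ne_zero_iff.2 fun l hl => ?_
          have hil : i < l := Finset.mem_Ioi.mp hl
          refine sub_ne_zero_of_ne fun e => ?_
          have h3 : σ l = σ i := hinj (by simpa using e)
          have h4 : l = i := Fin.succAbove_right_injective h3
          exact absurd (h4 ▸ hil) (lt_irrefl l)
      apply Matrix.eq_zero_of_mulVec_eq_zero hdet
      funext k
      have hk1 : 1 ≤ (k : ℕ) + 1 := by omega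
      have hk2 : (k : ℕ) + 1 ≤ n' + 1 - 1 := by omega
      have h2 := hpow ((k : ℕ) + 1) hk1 hk2
      rw [Fin.sum_univ_succAbove _ i0] at h2
      have hzt : ((2 * ((k:ℕ)+1) : ℕ) : ℝ) * y i0 ^ (2 * ((k:ℕ)+1) - 1) * v i0 = 0 := by
        rw [hvi0, mul_zero]
      rw [hzt, zero_add] at h2
      have heq : ∑ b, ((2 * ((k:ℕ)+1) : ℕ) : ℝ) * (((y (σ b)) ^ 2) ^ ((k:ℕ)+1) * u b) = 0 := by
        rw [← h2]
        refine Finset.sum_congr rfl fun b _ => ?_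
        have hyb := hzother _ (hσne b)
        have e1 : (y (σ b) ^ 2) ^ ((k : ℕ) + 1)
            = y (σ b) ^ (2 * ((k:ℕ)+1) - 1) * y (σ b) := by
          rw [← pow_mul, ← pow_succ]
          congr 1
          try omega
        rw [hu, e1, hσ]
        rw [hσ] at hyb
        field_simp
        try ring
      rw [← Finset.mul_sum] at heq
      rcases mul_eq_zero.1 heq with h | h
      · exfalso
        have h2k : (2 * ((k:ℕ)+1) : ℕ) ≠ 0 := by omega
        exact h2k (by exact_mod_cast h)
      · simpa [Matrix.mulVec, dotProduct] using h
    funext i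
    rcases eq_or_ne i i0 with rfl | hne
    · exact hvi0
    · obtain ⟨b, hb⟩ := Fin.exists_succAbove_eq hne
      have hub := congrFun hu0 b
      simp only [hu, Pi.zero_apply] at hub
      rw [hσ] at hub
      rw [← hb]
      rcases div_eq_zero_iff.1 hub with h | h
      · exact h
      · exact absurd h (hzother _ (hσne b))

lemma hasDeriv_psumFn {n : ℕ} (N : ℕ) (_hN : 1 ≤ N) (w : Fin n → ℝ) :
    HasStrictFDerivAt (fun x : Fin n → ℝ => ∑ l, x l ^ N)
      (∑ i : Fin n, (((N : ℕ) : ℝ) * w i ^ (N - 1)) •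
        (ContinuousLinearMap.proj i : (Fin n → ℝ) →L[ℝ] ℝ)) w := by
  apply HasStrictFDerivAt.fun_sum
  intro i _
  exact (hasStrictDerivAt_pow N (w i)).comp_hasStrictFDerivAt w (hasStrictFDerivAt_apply i w)

lemma hasDeriv_prodFn {n : ℕ} (w : Fin n → ℝ) :
    HasStrictFDerivAt (fun x : Fin n → ℝ => ∏ l, x l)
      (∑ i : Fin n, (∏ l ∈ Finset.univ.erase i, w l) •
        (ContinuousLinearMap.proj i : (Fin n → ℝ) →L[ℝ] ℝ)) w := by
  classical
  have h := HasStrictFDerivAt.finset_prod (u := (Finset.univ : Finset (Fin n)))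
    (g := fun i (x : Fin n → ℝ) => x i)
    (g' := fun i => (ContinuousLinearMap.proj i : (Fin n → ℝ) →L[ℝ] ℝ)) (x := w)
    (fun i _ => hasStrictFDerivAt_apply i w)
  simpa using h

/-- Theorem 1.4 for type `Dₙ`: a nonempty real variety defined by polynomials in the
basic invariants of `Dₙ` omitting one, `π_j`, meets the reflection arrangement of
`Dₙ`, i.e. contains a point two of whose coordinates have equal absolute value. -/
theorem all_but_one_Dn
    (n : ℕ) (hn : 2 ≤ n) (j : ℕ) (hj1 : 1 ≤ j) (hjn : j ≤ n)
    (m : ℕ) (f : Fin m → MvPolynomial (Fin n) ℝ)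
    (hf : ∀ l, f l ∈ Algebra.adjoin ℝ
      {p : MvPolynomial (Fin n) ℝ |
        ∃ i, 1 ≤ i ∧ i ≤ n ∧ i ≠ j ∧ p = basicInvariantDn n i})
    (hX : ∃ x : Fin n → ℝ, ∀ l, eval x (f l) = 0) :
    ∃ x : Fin n → ℝ, (∀ l, eval x (f l) = 0) ∧
      ∃ i i' : Fin n, i ≠ i' ∧ |x i| = |x i'| := by
  classical
  obtain ⟨x, hx⟩ := hX
  by_cases hsp : n = 2 ∧ j = 1
  · -- special case n = 2, j = 1 : only x₁x₂ is fixed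
    obtain ⟨rfl, rfl⟩ := hsp
    set c := x 0 * x 1 with hcdef
    set s := Real.sqrt |c| with hs
    set y : Fin 2 → ℝ := ![if c < 0 then -s else s, s] with hy
    have hy0 : y 0 = if c < 0 then -s else s := rfl
    have hy1 : y 1 = s := rfl
    have hss : s * s = |c| := Real.mul_self_sqrt (abs_nonneg c)
    have hy01 : y 0 * y 1 = c := by
      rw [hy0, hy1]
      by_cases hcneg : c < 0
      · rw [if_pos hcneg, neg_mul, hss, abs_of_neg hcneg, neg_neg]
      · rw [if_neg hcneg, hss, abs_of_nonneg (not_lt.1 hcneg)]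
    have hSeq : ∀ p ∈ {p : MvPolynomial (Fin 2) ℝ |
        ∃ i, 1 ≤ i ∧ i ≤ 2 ∧ i ≠ 1 ∧ p = basicInvariantDn 2 i}, eval y p = eval x p := by
      rintro p ⟨i, hi1, hi2, hij, rfl⟩
      have hi : i = 2 := by omega
      subst hi
      rw [eval_basicInvariantDn, eval_basicInvariantDn]
      norm_num [Fin.prod_univ_two]
      rw [hy01]
    refine ⟨y, fun l => ?_, 0, 1, by decide, ?_⟩
    · rw [eval_congr_adjoin _ x y hSeq (f l) (hf l)]
      exact hx l
    · rw [hy0, hy1]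
      by_cases hcneg : c < 0
      · rw [if_pos hcneg, abs_neg]
      · rw [if_neg hcneg]
  · -- general case
    set Ψ : (Fin n → ℝ) → (Fin n → ℝ) :=
      fun z a => eval z (basicInvariantDn n ((a : ℕ) + 1)) with hΨ
    set F : Set (Fin n → ℝ) := {z | ∀ a : Fin n, (a : ℕ) + 1 ≠ j → Ψ z a = Ψ x a} with hF
    have hxF : x ∈ F := fun a _ => rfl
    have hcont : ∀ a : Fin n, Continuous fun z => Ψ z a := by
      intro a
      have hfe : (fun z : Fin n → ℝ => Ψ z a) = fun z =>
          (if (a:ℕ)+1 ≤ n/2 then ∑ l, z l ^ (2*((a:ℕ)+1))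
           else if (a:ℕ)+1 = n/2+1 then ∏ l, z l
           else ∑ l, z l ^ (2*((a:ℕ)+1)-2)) := by
        funext z
        simp only [hΨ]
        rw [eval_basicInvariantDn]
      rw [hfe]
      split_ifs
      · exact continuous_finset_sum _ fun l _ => (continuous_apply l).pow _
      · exact continuous_finset_prod _ fun l _ => continuous_apply l
      · exact continuous_finset_sum _ fun l _ => (continuous_apply l).pow _
    have hFclosed : IsClosed F := by
      have hFeq : F = ⋂ a : Fin n, {z | (a:ℕ)+1 ≠ j → Ψ z a = Ψ x a} := by
        ext z
        simp [hF, Set.mem_iInter]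
      rw [hFeq]
      refine isClosed_iInter fun a => ?_
      by_cases ha : (a:ℕ)+1 = j
      · simp [ha]
      · have : {z : Fin n → ℝ | (a:ℕ)+1 ≠ j → Ψ z a = Ψ x a} = {z | Ψ z a = Ψ x a} := by
          ext z; simp [ha]
        rw [this]
        exact isClosed_eq (hcont a) continuous_const
    obtain ⟨i0, hi01, hi0n, hi0j, hi0e⟩ : ∃ i0, 1 ≤ i0 ∧ i0 ≤ n ∧ i0 ≠ j ∧ i0 ≠ n/2+1 := by
      by_cases hj' : j = 1
      · have hn2 : n ≠ 2 := fun e => hsp ⟨e, hj'⟩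
        by_cases hn3 : n ≤ 3
        · exact ⟨3, by omega, by omega, by omega, by omega⟩
        · exact ⟨2, by omega, by omega, by omega, by omega⟩
      · exact ⟨1, by omega, by omega, by omega, by omega⟩
    set E : ℕ := if i0 ≤ n/2 then 2*i0 else 2*i0 - 2 with hE
    have hEeven : ∃ e, E = 2*e := by
      rw [hE]; split_ifs
      · exact ⟨i0, rfl⟩
      · exact ⟨i0-1, by omega⟩
    have hE1 : 1 ≤ E := by rw [hE]; split_ifs <;> omega
    set a0 : Fin n := ⟨i0 - 1, by omega⟩ with ha0
    have ha0i : ((a0 : ℕ) + 1) = i0 := by simp [ha0]; omega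
    have ha0v : ∀ z : Fin n → ℝ, Ψ z a0 = ∑ l, z l ^ E := by
      intro z
      simp only [hΨ]
      rw [ha0i, eval_basicInvariantDn]
      by_cases hc1 : i0 ≤ n/2
      · rw [if_pos hc1, hE, if_pos hc1]
      · rw [if_neg hc1, if_neg hi0e, hE, if_neg hc1]
    have hFbdd : Bornology.IsBounded F := by
      rw [isBounded_iff_forall_norm_le]
      refine ⟨max 1 (Ψ x a0), fun z hz => ?_⟩
      have hza0 : Ψ z a0 = Ψ x a0 := hz a0 (by rw [ha0i]; exact hi0j)
      have hsum : ∑ l, z l ^ E = Ψ x a0 := by rw [← ha0v z]; exact hza0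
      rw [pi_norm_le_iff_of_nonneg (le_trans zero_le_one (le_max_left _ _))]
      intro l
      rw [Real.norm_eq_abs]
      have hnn : ∀ i : Fin n, 0 ≤ z i ^ E := by
        obtain ⟨e, he⟩ := hEeven
        intro i
        rw [he, pow_mul]
        positivity
      have hle : z l ^ E ≤ Ψ x a0 := by
        rw [← hsum]
        exact Finset.single_le_sum (fun i _ => hnn i) (Finset.mem_univ l)
      have habs : |z l| ^ E ≤ Ψ x a0 := by
        rw [← abs_pow, abs_of_nonneg (hnn l)]
        exact hle
      by_cases h1 : |z l| ≤ 1
      · exact le_trans h1 (le_max_left _ _)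
      · push_neg at h1
        have h2 : |z l| ≤ |z l| ^ E := le_self_pow₀ h1.le (by omega)
        exact le_trans (le_trans h2 habs) (le_max_right _ _)
    have hFcpt : IsCompact F := Metric.isCompact_of_isClosed_isBounded hFclosed hFbdd
    set aj : Fin n := ⟨j - 1, by omega⟩ with haj
    have haji : ((aj : ℕ) + 1) = j := by simp [haj]; omega
    obtain ⟨w, hwF, hwmax⟩ := hFcpt.exists_isMaxOn ⟨x, hxF⟩ (hcont aj).continuousOn
    by_cases hwarr : ∃ i i' : Fin n, i ≠ i' ∧ |w i| = |w i'|
    · obtain ⟨i, i', hii, habs⟩ := hwarr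
      refine ⟨w, fun l => ?_, i, i', hii, habs⟩
      have hSeq : ∀ p ∈ {p : MvPolynomial (Fin n) ℝ |
          ∃ i, 1 ≤ i ∧ i ≤ n ∧ i ≠ j ∧ p = basicInvariantDn n i}, eval w p = eval x p := by
        rintro p ⟨i2, hi21, hi22, hi2j, rfl⟩
        have hib : i2 - 1 < n := by omega
        have hiv : ((⟨i2 - 1, hib⟩ : Fin n) : ℕ) + 1 = i2 := by simp; omega
        have := hwF ⟨i2 - 1, hib⟩ (by rw [hiv]; exact hi2j)
        simp only [hΨ] at this
        rwa [hiv] at this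
      rw [eval_congr_adjoin _ x w hSeq (f l) (hf l)]
      exact hx l
    · exfalso
      push_neg at hwarr
      have hinj : Function.Injective fun i => (w i)^2 := by
        intro i i' he
        by_contra hne
        apply hwarr i i' hne
        have h2 := congrArg Real.sqrt he
        simpa [Real.sqrt_sq_eq_abs] using h2
      set c : Fin n → Fin n → ℝ := fun a i =>
        if (a:ℕ)+1 ≤ n/2 then ((2*((a:ℕ)+1) : ℕ) : ℝ) * w i ^ (2*((a:ℕ)+1) - 1)
        else if (a:ℕ)+1 = n/2+1 then ∏ l ∈ Finset.univ.erase i, w l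
        else ((2*((a:ℕ)+1) - 2 : ℕ) : ℝ) * w i ^ (2*((a:ℕ)+1) - 3) with hcd
      set D : (Fin n → ℝ) →L[ℝ] (Fin n → ℝ) :=
        ContinuousLinearMap.pi (fun a => ∑ i, c a i •
          (ContinuousLinearMap.proj i : (Fin n → ℝ) →L[ℝ] ℝ)) with hD
      have hDapp : ∀ (v : Fin n → ℝ) a, D v a = ∑ i, c a i * v i := by
        intro v a
        rw [hD]
        simp [ContinuousLinearMap.pi_apply, ContinuousLinearMap.sum_apply]
      have hderiv : HasStrictFDerivAt Ψ D w := by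
        rw [hasStrictFDerivAt_pi']
        intro a
        rw [hD, ContinuousLinearMap.proj_pi]
        by_cases hc1 : (a:ℕ)+1 ≤ n/2
        · have hfe : (fun z : Fin n → ℝ => Ψ z a) = fun z => ∑ l, z l ^ (2*((a:ℕ)+1)) := by
            funext z
            simp only [hΨ]
            rw [eval_basicInvariantDn, if_pos hc1]
          rw [hfe]
          have hcoef : ∀ i : Fin n, c a i
              = ((2*((a:ℕ)+1) : ℕ) : ℝ) * w i ^ (2*((a:ℕ)+1) - 1) := by
            intro i; rw [hcd]; simp only [if_pos hc1]
          simp only [hcoef]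
          exact hasDeriv_psumFn (2*((a:ℕ)+1)) (by omega) w
        · by_cases hc2 : (a:ℕ)+1 = n/2+1
          · have hfe : (fun z : Fin n → ℝ => Ψ z a) = fun z => ∏ l, z l := by
              funext z
              simp only [hΨ]
              rw [eval_basicInvariantDn, if_neg hc1, if_pos hc2]
            rw [hfe]
            have hcoef : ∀ i : Fin n, c a i = ∏ l ∈ Finset.univ.erase i, w l := by
              intro i; rw [hcd]; simp only [if_neg hc1, if_pos hc2]
            simp only [hcoef]
            exact hasDeriv_prodFn w
          · have hfe : (fun z : Fin n → ℝ => Ψ z a) = fun z => ∑ l, z l ^ (2*((a:ℕ)+1)-2) := by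
              funext z
              simp only [hΨ]
              rw [eval_basicInvariantDn, if_neg hc1, if_neg hc2]
            rw [hfe]
            have he : 2*((a:ℕ)+1) - 2 - 1 = 2*((a:ℕ)+1) - 3 := by omega
            have hcoef : ∀ i : Fin n, c a i
                = ((2*((a:ℕ)+1) - 2 : ℕ) : ℝ) * w i ^ (2*((a:ℕ)+1) - 2 - 1) := by
              intro i; rw [hcd]; simp only [if_neg hc1, if_neg hc2, he]
            simp only [hcoef]
            exact hasDeriv_psumFn (2*((a:ℕ)+1) - 2) (by omega) w
      have hinjD : Function.Injective D := by
        intro v v' hvv'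
        have h0 : D (v - v') = 0 := by rw [map_sub, hvv', sub_self]
        have hz := jacobian_inj hn w hinj (v - v') ?_ ?_
        · exact sub_eq_zero.1 hz
        · have hlt : n/2 < n := by omega
          have hcomp := congrFun h0 ⟨n/2, hlt⟩
          rw [hDapp] at hcomp
          have h1 : ¬ ((n/2 : ℕ) + 1 ≤ n/2) := by omega
          have hcoef : ∀ i : Fin n, c ⟨n/2, hlt⟩ i = ∏ l ∈ Finset.univ.erase i, w l := by
            intro i; rw [hcd]; simp [h1]
          rw [Finset.sum_congr rfl fun i _ => by rw [hcoef]] at hcomp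
          exact hcomp
        · intro m' hm1 hm2
          by_cases hmh : m' ≤ n/2
          · have hlt : m' - 1 < n := by omega
            have hcomp := congrFun h0 ⟨m' - 1, hlt⟩
            rw [hDapp] at hcomp
            have hidx : ((⟨m' - 1, hlt⟩ : Fin n) : ℕ) + 1 = m' := by simp; omega
            have hcoef : ∀ i : Fin n, c ⟨m' - 1, hlt⟩ i
                = ((2*m' : ℕ) : ℝ) * w i ^ (2*m' - 1) := by
              intro i; rw [hcd]; simp only [hidx]; rw [if_pos hmh]
            rw [Finset.sum_congr rfl fun i _ => by rw [hcoef]] at hcomp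
            exact hcomp
          · have hlt : m' < n := by omega
            have hcomp := congrFun h0 ⟨m', hlt⟩
            rw [hDapp] at hcomp
            have hidx : ((⟨m', hlt⟩ : Fin n) : ℕ) + 1 = m' + 1 := rfl
            have h1 : ¬ (m' + 1 ≤ n/2) := by omega
            have h2 : m' + 1 ≠ n/2 + 1 := by omega
            have e1 : (2*(m'+1) - 2 : ℕ) = 2*m' := by omega
            have e2 : (2*(m'+1) - 3 : ℕ) = 2*m' - 1 := by omega
            have hcoef : ∀ i : Fin n, c ⟨m', hlt⟩ i
                = ((2*m' : ℕ) : ℝ) * w i ^ (2*m' - 1) := by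
              intro i
              rw [hcd]
              simp only [hidx]
              rw [if_neg h1, if_neg h2, e1, e2]
            rw [Finset.sum_congr rfl fun i _ => by rw [hcoef]] at hcomp
            exact hcomp
      have hsurjD : Function.Surjective (D : (Fin n → ℝ) →ₗ[ℝ] (Fin n → ℝ)) :=
        LinearMap.injective_iff_surjective.1 hinjD
      set Deq : (Fin n → ℝ) ≃L[ℝ] (Fin n → ℝ) :=
        (LinearEquiv.ofBijective (D : (Fin n → ℝ) →ₗ[ℝ] (Fin n → ℝ))
          ⟨hinjD, hsurjD⟩).toContinuousLinearEquiv with hDeq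
      have hcoe : (Deq : (Fin n → ℝ) →L[ℝ] (Fin n → ℝ)) = D := by
        ext v
        rfl
      have hmap : Filter.map Ψ (nhds w) = nhds (Ψ w) :=
        HasStrictFDerivAt.map_nhds_eq_of_equiv (f' := Deq) (hcoe ▸ hderiv)
      have himg : Ψ '' Set.univ ∈ nhds (Ψ w) := by
        rw [← hmap]
        exact Filter.image_mem_map Filter.univ_mem
      obtain ⟨δ, hδ, hball⟩ := Metric.mem_nhds_iff.1 himg
      set z : Fin n → ℝ := Function.update (Ψ w) aj (Ψ w aj + δ/2) with hzdef
      have hzball : z ∈ Metric.ball (Ψ w) δ := by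
        rw [Metric.mem_ball, dist_pi_lt_iff hδ]
        intro b
        rcases eq_or_ne b aj with rfl | hb
        · rw [hzdef, Function.update_self, Real.dist_eq, add_sub_cancel_left,
            abs_of_pos (by linarith)]
          linarith
        · rw [hzdef, Function.update_of_ne hb, dist_self]
          exact hδ
      obtain ⟨y, -, hy⟩ := hball hzball
      have hyF : y ∈ F := by
        intro a haj'
        have hanej : a ≠ aj := by
          intro e
          rw [e, haji] at haj'
          exact haj' rfl
        calc Ψ y a = z a := congrFun hy a
        _ = Ψ w a := by rw [hzdef]; exact Function.update_of_ne hanej _ _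
        _ = Ψ x a := hwF a haj'
      have hlt2 : Ψ w aj < Ψ y aj := by
        have hz2 : Ψ y aj = Ψ w aj + δ/2 := by
          rw [congrFun hy aj, hzdef, Function.update_self]
        rw [hz2]
        linarith
      exact absurd (hwmax hyF) (not_le.2 hlt2)
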